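/- For A = diag(a_0,...,a_n) with distinct diagonal entries and z not equal to any a_k, the function Φ_z(x,y) = (1 + (R_z x, x))(R_z y, y) − (R_z x, y)^2 with R_z = (zI − A)^{-1} admits the partial fraction decomposition Φ_z(x,y) = Σ_{k=0}^n F_k(x,y)/(z − a_k), where F_k(x,y) = y_k^2 + Σ_{j≠k} (x_k y_j − x_j y_k)^2/(a_k − a_j). -/

import Mathlib

/-- Partial fraction decomposition of Moser's function Φ_z(x,y) into the
Uhlenbeck–Devaney integrals F_k. -/
theorem phi_partial_fractions (n : ℕ) (a : Fin (n+1) → ℝ)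
    (ha : Function.Injective a) (x y : Fin (n+1) → ℝ)
    (z : ℝ) (hz : ∀ k, z ≠ a k) :
    (1 + ∑ i, x i * x i / (z - a i)) * (∑ i, y i * y i / (z - a i)) -
      (∑ i, x i * y i / (z - a i))^2 =
    ∑ k, (y k^2 + ∑ j ∈ Finset.univ \ {k}, (x k * y j - x j * y k)^2 / (a k - a j)) /
      (z - a k) := by
  have hc : ∀ k, z - a k ≠ 0 := fun k => sub_ne_zero.mpr (hz k)
  have hd : ∀ i j : Fin (n+1), i ≠ j → a i - a j ≠ 0 := fun i j hij =>
    sub_ne_zero.mpr (fun h => hij (ha h))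
  set F : Fin (n+1) → Fin (n+1) → ℝ := fun i j =>
    if j = i then 0 else
      (x i * x i * (y j * y j) - x i * y i * (x j * y j)) / ((z - a i) * (z - a j)) with hF
  set G : Fin (n+1) → Fin (n+1) → ℝ := fun i j =>
    if j = i then 0 else
      (x i * y j - x j * y i)^2 / ((a i - a j) * (z - a i)) with hG
  -- LHS rewriting
  have hL : (1 + ∑ i, x i * x i / (z - a i)) * (∑ i, y i * y i / (z - a i)) -
      (∑ i, x i * y i / (z - a i))^2 =
      (∑ i, y i * y i / (z - a i)) + ∑ i, ∑ j, F i j := by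
    rw [add_mul, one_mul, sq, Finset.sum_mul_sum, Finset.sum_mul_sum, add_sub_assoc]
    congr 1
    rw [← Finset.sum_sub_distrib]
    refine Finset.sum_congr rfl fun i _ => ?_
    rw [← Finset.sum_sub_distrib]
    refine Finset.sum_congr rfl fun j _ => ?_
    simp only [hF]
    by_cases h : j = i
    · subst h; field_simp; simp
    · rw [if_neg h]; field_simp
  -- RHS rewriting
  have hR : (∑ k, (y k^2 + ∑ j ∈ Finset.univ \ {k},
        (x k * y j - x j * y k)^2 / (a k - a j)) / (z - a k)) =
      (∑ i, y i * y i / (z - a i)) + ∑ i, ∑ j, G i j := by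
    rw [← Finset.sum_add_distrib]
    refine Finset.sum_congr rfl fun k _ => ?_
    rw [add_div, sq]
    congr 1
    rw [show (Finset.univ \ {k} : Finset (Fin (n+1))) =
        Finset.univ.filter (fun j => ¬ (j = k)) by ext; simp,
      Finset.sum_filter, Finset.sum_div]
    refine Finset.sum_congr rfl fun j _ => ?_
    simp only [hG]
    by_cases h : j = k
    · simp [h]
    · rw [if_pos h, if_neg h, div_div]
  rw [hL, hR]
  congr 1
  -- symmetrization
  have key : ∀ i j, F i j + F j i = G i j + G j i := by
    intro i j
    by_cases h : j = i
    · subst h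
      show F j j + F j j = G j j + G j j
      simp only [hF, hG]
      norm_num
    · have h' : ¬ i = j := fun e => h e.symm
      simp only [hF, hG, if_neg h, if_neg h']
      have d1 := hd i j (fun e => h' e)
      have d2 := hd j i (fun e => h e)
      field_simp [hc i, hc j]
      ring
  have swapF : ∑ i, ∑ j, F i j = ∑ i, ∑ j, F j i := Finset.sum_comm
  have swapG : ∑ i, ∑ j, G i j = ∑ i, ∑ j, G j i := Finset.sum_comm
  have h2 : (2:ℝ) * (∑ i, ∑ j, F i j) = 2 * (∑ i, ∑ j, G i j) := by
    calc (2:ℝ) * (∑ i, ∑ j, F i j)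
        = (∑ i, ∑ j, F i j) + (∑ i, ∑ j, F j i) := by rw [← swapF]; ring
      _ = ∑ i, ∑ j, (F i j + F j i) := by
          rw [← Finset.sum_add_distrib]
          exact Finset.sum_congr rfl fun i _ => (Finset.sum_add_distrib).symm
      _ = ∑ i, ∑ j, (G i j + G j i) := by
          exact Finset.sum_congr rfl fun i _ => Finset.sum_congr rfl fun j _ => key i j
      _ = (∑ i, ∑ j, G i j) + (∑ i, ∑ j, G j i) := by
          rw [← Finset.sum_add_distrib]
          exact Finset.sum_congr rfl fun i _ => Finset.sum_add_distrib
      _ = 2 * (∑ i, ∑ j, G i j) := by rw [← swapG]; ring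
  linarith
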